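/- arXiv:1003.3534 — 2 statements merged into one kernel-verified Lean document; each statement's English description precedes it below -/
import Mathlib

section
/- Let (D_t)_{t≥0} be the Kingman coalescent started from n particles, i.e. a pure death chain on {1,…,n} jumping from k to k−1 at rate C(k,2). Then for 1 ≤ k ≤ n, P(D_t = k) = ∑_{j=k}^{n} [(−1)^{j+k}(2j−1)(j+k−2)!·C(n,j)] / [k!(k−1)!(j−k)!·C(n+j−1,j)] · exp(−t·C(j,2)). -/
open Finset

lemma lemL (N : ℕ) : ∀ (M : ℕ) (x : ℝ), 0 < x →
    ∑ i ∈ range (M + 1), (-1 : ℝ) ^ i * (M.choose i : ℝ) / ∏ r ∈ range (N + 1), (x + i + r)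
      = ((N + M).choose M : ℝ) * (M.factorial : ℝ) / ∏ r ∈ range (N + M + 1), (x + r) := by
  intro M
  induction M with
  | zero =>
    intro x hx
    simp
  | succ M ih =>
    intro x hx
    have hx1 : (0:ℝ) < x + 1 := by linarith
    have key : ∑ i ∈ range (M + 2), (-1 : ℝ) ^ i * ((M+1).choose i : ℝ)
          / ∏ r ∈ range (N + 1), (x + i + r)
        = (∑ i ∈ range (M + 1), (-1 : ℝ) ^ i * (M.choose i : ℝ)
            / ∏ r ∈ range (N + 1), (x + i + r))
          - (∑ i ∈ range (M + 1), (-1 : ℝ) ^ i * (M.choose i : ℝ)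
            / ∏ r ∈ range (N + 1), ((x+1) + i + r)) := by
      have hext : ∑ i ∈ range (M + 1), (-1 : ℝ) ^ i * (M.choose i : ℝ)
            / ∏ r ∈ range (N + 1), (x + i + r)
          = ∑ i ∈ range (M + 2), (-1 : ℝ) ^ i * (M.choose i : ℝ)
            / ∏ r ∈ range (N + 1), (x + i + r) := by
        rw [Finset.sum_range_succ _ (M+1)]
        simp [Nat.choose_succ_self]
      rw [hext, Finset.sum_range_succ' _ (M+1), Finset.sum_range_succ' _ (M+1)]
      have hterm : ∀ i ∈ range (M+1),
          (-1 : ℝ) ^ (i+1) * ((M+1).choose (i+1) : ℝ) / ∏ r ∈ range (N + 1), (x + ↑(i+1) + r)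
          = ((-1 : ℝ) ^ (i+1) * (M.choose (i+1) : ℝ) / ∏ r ∈ range (N + 1), (x + ↑(i+1) + r)
            - (-1 : ℝ) ^ i * (M.choose i : ℝ) / ∏ r ∈ range (N + 1), ((x+1) + i + r)) := by
        intro i _
        have hp : (∏ r ∈ range (N + 1), (x + ↑(i+1) + r))
            = ∏ r ∈ range (N + 1), ((x+1) + i + r) := by
          apply Finset.prod_congr rfl
          intro r _
          push_cast; ring
        rw [hp, Nat.choose_succ_succ]
        push_cast
        ring
      rw [Finset.sum_congr rfl hterm, Finset.sum_sub_distrib]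
      simp only [Nat.choose_zero_right, Nat.cast_one, Nat.cast_zero]
      ring
    rw [key, ih x hx, ih (x+1) hx1]
    have hP : (0:ℝ) < ∏ r ∈ range (N + M + 1), (x + r) := by
      apply Finset.prod_pos; intro r _; positivity
    have hQ : (0:ℝ) < ∏ r ∈ range (N + M + 1), (x + 1 + r) := by
      apply Finset.prod_pos; intro r _; positivity
    have hfull : (∏ r ∈ range (N + M + 2), (x + r))
        = x * ∏ r ∈ range (N + M + 1), (x + 1 + r) := by
      rw [Finset.prod_range_succ' (fun r => x + r) (N+M+1)]
      simp only [Nat.cast_zero, add_zero]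
      rw [mul_comm]
      congr 1
      apply Finset.prod_congr rfl
      intro r _; push_cast; ring
    have hfull2 : (∏ r ∈ range (N + M + 2), (x + r))
        = (∏ r ∈ range (N + M + 1), (x + r)) * (x + ((N:ℝ) + M + 1)) := by
      rw [Finset.prod_range_succ]
      push_cast; ring
    have hPQ : (∏ r ∈ range (N + M + 1), (x + r)) * (x + ((N:ℝ) + M + 1))
        = x * ∏ r ∈ range (N + M + 1), (x + 1 + r) := by rw [← hfull2, hfull]
    have hnat : ((N:ℝ) + M + 1) * (((N + M).choose M : ℝ) * (M.factorial : ℝ))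
        = ((N + (M+1)).choose (M+1) : ℝ) * ((M+1).factorial : ℝ) := by
      have h2 : (N+M+1) * ((N+M).choose M * M.factorial)
          = ((N+(M+1)).choose (M+1)) * (M+1).factorial := by
        have h3 : (N+M+1) * (N+M).choose M = (N+M+1).choose (M+1) * (M+1) :=
          Nat.add_one_mul_choose_eq (N+M) M
        rw [Nat.factorial_succ, ← mul_assoc, h3]
        ring
      exact_mod_cast h2
    have hidx : N + (M+1) + 1 = N + M + 2 := by omega
    rw [hidx, hfull]
    set P := ∏ r ∈ range (N + M + 1), (x + (r:ℝ)) with hPdef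
    set Q := ∏ r ∈ range (N + M + 1), (x + 1 + (r:ℝ)) with hQdef
    rw [div_sub_div _ _ hP.ne' hQ.ne', div_eq_div_iff (by positivity) (by positivity)]
    linear_combination (-((((N + M).choose M : ℝ) * (M.factorial : ℝ))*Q))*hPQ + (P*Q)*hnat

lemma lemZero (M : ℕ) (a : ℝ) (ha : 0 < a) :
    ∑ i ∈ range (M + 2), (-1 : ℝ) ^ i * ((M+1).choose i : ℝ) * (a + 2 * i)
      / ∏ r ∈ range (M + 2), (a + i + r) = 0 := by
  have ha1 : (0:ℝ) < a + 1 := by linarith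
  have hsplit : ∀ i ∈ range (M + 2),
      (-1 : ℝ) ^ i * ((M+1).choose i : ℝ) * (a + 2 * i) / ∏ r ∈ range (M + 2), (a + i + r)
      = (-1 : ℝ) ^ i * ((M+1).choose i : ℝ) / ∏ r ∈ range (M + 1), ((a+1) + i + r)
        + (-1 : ℝ) ^ i * (((M+1).choose i : ℝ) * i) / ∏ r ∈ range (M + 2), (a + i + r) := by
    intro i _
    have hprod : (∏ r ∈ range (M + 2), (a + i + r))
        = (∏ r ∈ range (M + 1), ((a+1) + i + r)) * (a + i) := by
      rw [Finset.prod_range_succ' (fun r => a + i + r) (M+1)]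
      simp only [Nat.cast_zero, add_zero]
      congr 1
      apply Finset.prod_congr rfl
      intro r _; push_cast; ring
    have hpos : (0:ℝ) < ∏ r ∈ range (M + 1), ((a+1) + i + r) := by
      apply Finset.prod_pos; intro r _; positivity
    have hai : (0:ℝ) < a + i := by positivity
    rw [hprod]
    field_simp
    ring
  rw [Finset.sum_congr rfl hsplit, Finset.sum_add_distrib]
  have h1 : ∑ i ∈ range (M + 2), (-1 : ℝ) ^ i * ((M+1).choose i : ℝ)
      / ∏ r ∈ range (M + 1), ((a+1) + i + r)
      = ((M + (M+1)).choose (M+1) : ℝ) * ((M+1).factorial : ℝ)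
        / ∏ r ∈ range (M + (M+1) + 1), ((a+1) + r) := lemL M (M+1) (a+1) ha1
  have h2 : ∑ i ∈ range (M + 2), (-1 : ℝ) ^ i * (((M+1).choose i : ℝ) * i)
      / ∏ r ∈ range (M + 2), (a + i + r)
      = -((M+1) : ℝ) * (((M+1) + M).choose M : ℝ) * (M.factorial : ℝ)
        / ∏ r ∈ range ((M+1) + M + 1), ((a+1) + r) := by
    rw [Finset.sum_range_succ' _ (M+1)]
    have hterm : ∀ i ∈ range (M + 1),
        (-1 : ℝ) ^ (i+1) * (((M+1).choose (i+1) : ℝ) * ↑(i+1))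
          / ∏ r ∈ range (M + 2), (a + ↑(i+1) + r)
        = -((M+1) : ℝ) * ((-1 : ℝ) ^ i * ((M.choose i : ℝ))
            / ∏ r ∈ range (M + 2), ((a+1) + i + r)) := by
      intro i _
      have hc : ((M+1).choose (i+1)) * (i+1) = (M+1) * (M.choose i) :=
        (Nat.add_one_mul_choose_eq M i).symm
      have hp : (∏ r ∈ range (M + 2), (a + ↑(i+1) + r))
          = ∏ r ∈ range (M + 2), ((a+1) + i + r) := by
        apply Finset.prod_congr rfl
        intro r _; push_cast; ring
      rw [hp]
      have hc' : (((M+1).choose (i+1) : ℝ)) * ((i:ℝ)+1) = ((M+1) : ℝ) * (M.choose i : ℝ) := by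
        exact_mod_cast hc
      push_cast
      push_cast at hc'
      rw [hc', pow_succ]
      ring
    rw [Finset.sum_congr rfl hterm]
    simp only [Nat.cast_zero, mul_zero, zero_div, add_zero, Nat.cast_ofNat]
    rw [← Finset.mul_sum]
    rw [lemL (M+1) M (a+1) ha1]
    simp
    ring
  rw [h1, h2]
  have hsymm : (M + (M+1)).choose (M+1) = ((M+1) + M).choose M := by
    have : (M + (M+1)) - (M+1) = M := by omega
    rw [show M + (M+1) = (M+1) + M from by omega]
    rw [← Nat.choose_symm (by omega : M ≤ (M+1)+M), show ((M+1)+M) - M = M+1 from by omega]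
  have hidx : M + (M+1) + 1 = (M+1) + M + 1 := by omega
  rw [hsymm, hidx, Nat.factorial_succ]
  push_cast
  field_simp
  ring

noncomputable def cf (n j k : ℕ) : ℝ :=
  ((-1 : ℝ) ^ (j + k) * (2 * (j : ℝ) - 1) * (Nat.factorial (j + k - 2) : ℝ)
      * (n.choose j : ℝ))
    / ((Nat.factorial k : ℝ) * (Nat.factorial (k - 1) : ℝ)
      * (Nat.factorial (j - k) : ℝ) * ((n + j - 1).choose j : ℝ))

lemma fact_prod (b t : ℕ) :
    (((b + t).factorial : ℝ)) = (b.factorial : ℝ) * ∏ r ∈ range t, ((b : ℝ) + 1 + r) := by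
  induction t with
  | zero => simp
  | succ t ih =>
    rw [Finset.prod_range_succ, ← mul_assoc, ← ih,
      show b + (t + 1) = (b + t) + 1 from rfl, Nat.factorial_succ]
    push_cast
    ring

lemma cf_term (n k i : ℕ) (hk : 1 ≤ k) (hin : k + i ≤ n) :
    cf n (k + i) k = (n.factorial : ℝ) * ((n - 1).factorial : ℝ)
      / ((k.factorial : ℝ) * ((k - 1).factorial : ℝ) * (((n - k).factorial : ℝ)))
      * ((-1 : ℝ) ^ i * ((n - k).choose i : ℝ) * ((2 * (k : ℝ) - 1) + 2 * i)
        / ∏ r ∈ range ((n - k) + 1), ((2 * (k : ℝ) - 1) + i + r)) := by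
  have hn1 : 1 ≤ n := le_trans hk (by omega)
  unfold cf
  -- normalize ℕ indices
  rw [show k + i + k - 2 = 2 * k - 2 + i from by omega,
    show (k + i) - k = i from by omega,
    show n + (k + i) - 1 = (n + k + i - 1) from by omega]
  -- sign
  have hsign : (-1 : ℝ) ^ (k + i + k) = (-1 : ℝ) ^ i := by
    rw [show k + i + k = 2 * k + i from by omega, pow_add, pow_mul]
    norm_num
  rw [hsign]
  -- choose casts
  rw [Nat.cast_choose ℝ (show k + i ≤ n from hin),
    Nat.cast_choose ℝ (show k + i ≤ n + k + i - 1 from by omega),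
    Nat.cast_choose ℝ (show i ≤ n - k from by omega)]
  rw [show n - (k + i) = (n - k) - i from by omega,
    show (n + k + i - 1) - (k + i) = n - 1 from by omega]
  -- product as factorial ratio
  have hprod : (∏ r ∈ range ((n - k) + 1), ((2 * (k : ℝ) - 1) + i + r))
      = ((n + k + i - 1).factorial : ℝ) / ((2 * k - 2 + i).factorial : ℝ) := by
    have h1 := fact_prod (2 * k - 2 + i) ((n - k) + 1)
    rw [show (2 * k - 2 + i) + ((n - k) + 1) = n + k + i - 1 from by omega] at h1
    have hcast : ((2 * k - 2 + i : ℕ) : ℝ) = 2 * (k : ℝ) - 2 + i := by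
      rw [Nat.cast_add, Nat.cast_sub (by omega : 2 ≤ 2 * k)]
      push_cast; ring
    rw [hcast] at h1
    have h2 : (∏ r ∈ range ((n - k) + 1), ((2 * (k : ℝ) - 2 + i) + 1 + r))
        = ∏ r ∈ range ((n - k) + 1), ((2 * (k : ℝ) - 1) + i + r) := by
      apply Finset.prod_congr rfl; intro r _; ring
    rw [h2] at h1
    rw [h1]
    field_simp
  rw [hprod]
  -- now clear denominators
  have f1 : (0:ℝ) < (k.factorial : ℝ) := by exact_mod_cast k.factorial_pos
  have f2 : (0:ℝ) < ((k-1).factorial : ℝ) := by exact_mod_cast (k-1).factorial_pos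
  have f3 : (0:ℝ) < (i.factorial : ℝ) := by exact_mod_cast i.factorial_pos
  have f4 : (0:ℝ) < ((n-k).factorial : ℝ) := by exact_mod_cast (n-k).factorial_pos
  have f5 : (0:ℝ) < ((n-k-i).factorial : ℝ) := by exact_mod_cast (n-k-i).factorial_pos
  have f6 : (0:ℝ) < ((n-1).factorial : ℝ) := by exact_mod_cast (n-1).factorial_pos
  have f7 : (0:ℝ) < ((n+k+i-1).factorial : ℝ) := by exact_mod_cast (n+k+i-1).factorial_pos
  have f8 : (0:ℝ) < ((2*k-2+i).factorial : ℝ) := by exact_mod_cast (2*k-2+i).factorial_pos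
  have f9 : (0:ℝ) < ((k+i).factorial : ℝ) := by exact_mod_cast (k+i).factorial_pos
  have f10 : (0:ℝ) < (n.factorial : ℝ) := by exact_mod_cast n.factorial_pos
  have hcast2 : ((k + i : ℕ) : ℝ) = (k : ℝ) + i := by push_cast; ring
  rw [hcast2]
  field_simp
  ring

lemma cf_sum_zero (n k : ℕ) (hk : 1 ≤ k) (hkn : k < n) :
    ∑ j ∈ Finset.Icc k n, cf n j k = 0 := by
  rw [← Finset.Ico_add_one_right_eq_Icc, Finset.sum_Ico_eq_sum_range]
  obtain ⟨M, hM⟩ : ∃ M, n - k = M + 1 := ⟨n - k - 1, by omega⟩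
  rw [show n + 1 - k = M + 2 from by omega]
  have hterm : ∀ i ∈ range (M + 2),
      cf n (k + i) k = (n.factorial : ℝ) * ((n - 1).factorial : ℝ)
        / ((k.factorial : ℝ) * ((k - 1).factorial : ℝ) * (((n - k).factorial : ℝ)))
        * ((-1 : ℝ) ^ i * (((M+1)).choose i : ℝ) * ((2 * (k : ℝ) - 1) + 2 * i)
          / ∏ r ∈ range (M + 2), ((2 * (k : ℝ) - 1) + i + r)) := by
    intro i hi
    rw [Finset.mem_range] at hi
    rw [cf_term n k i hk (by omega)]
    rw [hM]
  rw [Finset.sum_congr rfl hterm, ← Finset.mul_sum]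
  rw [lemZero M (2 * (k:ℝ) - 1) (by
    have : (1:ℝ) ≤ (k:ℝ) := by exact_mod_cast hk
    linarith)]
  ring

lemma cf_self (n : ℕ) (hn : 1 ≤ n) : cf n n n = 1 := by
  unfold cf
  rw [show n + n - 2 = 2 * n - 2 from by omega, show n - n = 0 from by omega,
    show n + n - 1 = 2 * n - 1 from by omega]
  have hsign : (-1 : ℝ) ^ (n + n) = 1 := by
    rw [show n + n = 2 * n from by omega, pow_mul]; norm_num
  rw [hsign, Nat.choose_self]
  have hc : (((2 * n - 1).choose n : ℝ)) = ((2 * n - 1).factorial : ℝ)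
      / ((n.factorial : ℝ) * ((n - 1).factorial : ℝ)) := by
    rw [Nat.cast_choose ℝ (show n ≤ 2 * n - 1 from by omega),
      show 2 * n - 1 - n = n - 1 from by omega]
  have hfact : ((2 * n - 1).factorial : ℝ) = (2 * (n:ℝ) - 1) * ((2 * n - 2).factorial : ℝ) := by
    rw [show 2 * n - 1 = (2 * n - 2) + 1 from by omega, Nat.factorial_succ]
    have : ((2 * n - 2 : ℕ) : ℝ) = 2 * (n:ℝ) - 2 := by
      rw [Nat.cast_sub (by omega : 2 ≤ 2 * n)]; push_cast; ring
    rw [Nat.cast_mul, Nat.cast_add, Nat.cast_one, this]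
    ring
  rw [hc, hfact]
  norm_num
  have f1 : (0:ℝ) < (n.factorial : ℝ) := by exact_mod_cast n.factorial_pos
  have f2 : (0:ℝ) < ((n-1).factorial : ℝ) := by exact_mod_cast (n-1).factorial_pos
  have f3 : (0:ℝ) < ((2*n-2).factorial : ℝ) := by exact_mod_cast (2*n-2).factorial_pos
  have f4 : (0:ℝ) < 2 * (n:ℝ) - 1 := by
    have : (1:ℝ) ≤ (n:ℝ) := by exact_mod_cast hn
    linarith
  field_simp

lemma cf_rec (n k j : ℕ) (hk : 1 ≤ k) (hkj : k + 1 ≤ j) (hjn : j ≤ n) :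
    (((k+1).choose 2 : ℝ)) * cf n j (k+1) = ((k.choose 2 : ℝ) - (j.choose 2 : ℝ)) * cf n j k := by
  unfold cf
  rw [show j + (k + 1) - 2 = (j + k - 2) + 1 from by omega,
    show (k + 1) - 1 = k from by omega,
    show j - (k + 1) = j - k - 1 from by omega,
    show j + (k + 1) = (j + k) + 1 from by omega]
  have F1n : (j + k - 2 + 1).factorial = (j + k - 1) * (j + k - 2).factorial := by
    rw [Nat.factorial_succ]; congr 2; omega
  have F2n : (j - k).factorial = (j - k) * (j - k - 1).factorial := by
    have h := Nat.factorial_succ (j - k - 1)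
    rw [show j - k - 1 + 1 = j - k from by omega] at h
    exact h
  have F4n : k.factorial = k * (k - 1).factorial := by
    have h := Nat.factorial_succ (k - 1)
    rw [show k - 1 + 1 = k from by omega] at h
    exact h
  rw [F1n, F2n, Nat.factorial_succ k, F4n, pow_succ]
  rw [Nat.cast_choose_two, Nat.cast_choose_two, Nat.cast_choose_two]
  push_cast
  have c1 : ((j + k - 1 : ℕ) : ℝ) = (j : ℝ) + k - 1 := by
    rw [Nat.cast_sub (by omega : 1 ≤ j + k)]; push_cast; ring
  have c2 : ((j - k : ℕ) : ℝ) = (j : ℝ) - k := Nat.cast_sub (by omega)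
  have g1 : ((k : ℝ)) ≠ 0 := by
    have : (1:ℝ) ≤ (k:ℝ) := by exact_mod_cast hk
    linarith
  have g2 : ((j - k : ℕ) : ℝ) ≠ 0 := by
    have : (0:ℕ) < j - k := by omega
    exact_mod_cast this.ne'
  have g3 : ((k-1).factorial : ℝ) ≠ 0 := by exact_mod_cast (k-1).factorial_pos.ne'
  have g4 : ((j-k-1).factorial : ℝ) ≠ 0 := by exact_mod_cast (j-k-1).factorial_pos.ne'
  have g5 : (((n + j - 1).choose j : ℝ)) ≠ 0 := by
    exact_mod_cast (Nat.choose_pos (show j ≤ n + j - 1 from by omega)).ne'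
  have g6 : ((k.factorial : ℝ)) ≠ 0 := by exact_mod_cast k.factorial_pos.ne'
  field_simp
  rw [c2, c1]
  ring

lemma F_deriv (n k : ℕ) (hk : 1 ≤ k) (hkn : k ≤ n) (t : ℝ) :
    HasDerivAt (fun s => ∑ j ∈ Finset.Icc k n, cf n j k * Real.exp (-s * (j.choose 2 : ℝ)))
      ((((k+1).choose 2 : ℝ))
          * (∑ j ∈ Finset.Icc (k+1) n, cf n j (k+1) * Real.exp (-t * (j.choose 2 : ℝ)))
        - ((k.choose 2 : ℝ))
          * ∑ j ∈ Finset.Icc k n, cf n j k * Real.exp (-t * (j.choose 2 : ℝ))) t := by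
  have hterm : ∀ j ∈ Finset.Icc k n,
      HasDerivAt (fun s => cf n j k * Real.exp (-s * (j.choose 2 : ℝ)))
        (cf n j k * (Real.exp (-t * (j.choose 2 : ℝ)) * (-(j.choose 2 : ℝ)))) t := by
    intro j _
    have h1 : HasDerivAt (fun s : ℝ => -s * (j.choose 2 : ℝ)) (-(j.choose 2 : ℝ)) t := by
      simpa using ((hasDerivAt_id t).neg.mul_const ((j.choose 2 : ℝ)))
    exact (h1.exp).const_mul (cf n j k)
  have hsum := HasDerivAt.sum hterm
  convert hsum using 1
  · rfl
  · rfl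
  · ext s; rw [Finset.sum_apply]
  have key : ∑ j ∈ Finset.Icc (k+1) n,
        (((k+1).choose 2 : ℝ)) * (cf n j (k+1) * Real.exp (-t * (j.choose 2 : ℝ)))
      = ∑ j ∈ Finset.Icc k n,
        (((k.choose 2 : ℝ)) - ((j.choose 2 : ℝ))) * (cf n j k * Real.exp (-t * (j.choose 2 : ℝ))) := by
    have hins : Finset.Icc k n = insert k (Finset.Icc (k+1) n) := by
      rw [Finset.Icc_add_one_left_eq_Ioc, Finset.Ioc_insert_left hkn]
    rw [hins, Finset.sum_insert (by simp [Finset.Icc_add_one_left_eq_Ioc])]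
    rw [sub_self, zero_mul, zero_add]
    apply Finset.sum_congr rfl
    intro j hj
    rw [Finset.mem_Icc] at hj
    have := cf_rec n k j hk hj.1 hj.2
    calc ((k+1).choose 2 : ℝ) * (cf n j (k+1) * Real.exp (-t * (j.choose 2 : ℝ)))
        = (((k+1).choose 2 : ℝ) * cf n j (k+1)) * Real.exp (-t * (j.choose 2 : ℝ)) := by ring
      _ = (((k.choose 2 : ℝ)) - ((j.choose 2 : ℝ))) * cf n j k
            * Real.exp (-t * (j.choose 2 : ℝ)) := by rw [this]
      _ = _ := by ring
  rw [Finset.mul_sum, key, Finset.mul_sum, ← Finset.sum_sub_distrib]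
  apply Finset.sum_congr rfl
  intro j _
  ring

lemma ode_zero (lam : ℝ) (g : ℝ → ℝ) (h0 : g 0 = 0)
    (hd : ∀ t ≥ (0:ℝ), HasDerivWithinAt g (-(lam * g t)) (Set.Ici 0) t) :
    ∀ t ≥ (0:ℝ), g t = 0 := by
  intro T hT
  set h : ℝ → ℝ := fun t => g t * Real.exp (lam * t) with hh
  have hdh : ∀ t ≥ (0:ℝ), HasDerivWithinAt h 0 (Set.Ici 0) t := by
    intro t ht
    have hexp : HasDerivAt (fun t : ℝ => Real.exp (lam * t)) (Real.exp (lam * t) * lam) t := by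
      simpa using ((hasDerivAt_id t).const_mul lam).exp
    have := (hd t ht).mul hexp.hasDerivWithinAt
    convert this using 1
    · rfl
    · rfl
    · rfl
    ring
  have hcont : ContinuousOn h (Set.Icc 0 T) := fun x hx =>
    ((hdh x hx.1).continuousWithinAt).mono Set.Icc_subset_Ici_self
  have hder : ∀ x ∈ Set.Ico (0:ℝ) T, HasDerivWithinAt h 0 (Set.Ici x) x := fun x hx =>
    (hdh x hx.1).mono (Set.Ici_subset_Ici.mpr hx.1)
  have := constant_of_has_deriv_right_zero hcont hder T (Set.right_mem_Icc.mpr hT)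
  have h00 : h 0 = 0 := by simp [hh, h0]
  have hT0 : h T = 0 := by rw [this, h00]
  have : g T * Real.exp (lam * T) = 0 := hT0
  have hexpne : Real.exp (lam * T) ≠ 0 := Real.exp_ne_zero _
  exact (mul_eq_zero.mp this).resolve_right hexpne

lemma step_lemma (n k : ℕ) (q : ℝ → ℕ → ℝ) (hk : 1 ≤ k) (hkn : k ≤ n)
    (hinit : q 0 k = ∑ j ∈ Finset.Icc k n, cf n j k)
    (hnext : ∀ t ≥ (0:ℝ), q t (k+1)
      = ∑ j ∈ Finset.Icc (k+1) n, cf n j (k+1) * Real.exp (-t * (j.choose 2 : ℝ)))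
    (hkol : ∀ t ≥ (0:ℝ), HasDerivWithinAt (fun s => q s k)
      (((k + 1).choose 2 : ℝ) * q t (k + 1) - (k.choose 2 : ℝ) * q t k) (Set.Ici 0) t) :
    ∀ t ≥ (0:ℝ), q t k = ∑ j ∈ Finset.Icc k n, cf n j k * Real.exp (-t * (j.choose 2 : ℝ)) := by
  set F : ℝ → ℝ := fun s => ∑ j ∈ Finset.Icc k n, cf n j k * Real.exp (-s * (j.choose 2 : ℝ))
    with hF
  set g : ℝ → ℝ := fun s => q s k - F s with hg
  have h0 : g 0 = 0 := by
    simp only [hg, hF]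
    rw [hinit]
    simp
  have hd : ∀ t ≥ (0:ℝ), HasDerivWithinAt g (-((k.choose 2 : ℝ) * g t)) (Set.Ici 0) t := by
    intro t ht
    have hFd := (F_deriv n k hk hkn t).hasDerivWithinAt (s := Set.Ici 0)
    have := (hkol t ht).sub hFd
    convert this using 1
    · rfl
    · rfl
    · rfl
    rw [hnext t ht]
    simp only [hg, hF]
    ring
  intro t ht
  have := ode_zero ((k.choose 2 : ℝ)) g h0 hd t ht
  have : q t k - F t = 0 := this
  linarith [this]

/-- Kingman's coalescent started from `n` particles: the pure death chain on `{1,…,n}`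
jumping from `k` to `k-1` at rate `C(k,2)`, described by its marginals
`q t k = P(D_t = k)` via the Kolmogorov forward equations.  Then for `1 ≤ k ≤ n` and
`t ≥ 0`,
`P(D_t = k) = ∑_{j=k}^n [(-1)^{j+k}(2j-1)(j+k-2)!·C(n,j)] /
  [k!(k-1)!(j-k)!·C(n+j-1,j)] · exp(-t·C(j,2))`. -/
theorem stmt13 (n : ℕ) (hn : 1 ≤ n) (q : ℝ → ℕ → ℝ)
    (hq0 : q 0 n = 1) (hq0' : ∀ k, k ≠ n → q 0 k = 0)
    (hzero : ∀ t ≥ (0 : ℝ), ∀ k, n < k → q t k = 0)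
    (hkolmogorov : ∀ k, 1 ≤ k → k ≤ n → ∀ t ≥ (0 : ℝ),
      HasDerivWithinAt (fun s => q s k)
        (((k + 1).choose 2 : ℝ) * q t (k + 1) - (k.choose 2 : ℝ) * q t k)
        (Set.Ici 0) t) :
    ∀ k, 1 ≤ k → k ≤ n → ∀ t ≥ (0 : ℝ),
      q t k = ∑ j ∈ Finset.Icc k n,
        ((-1 : ℝ) ^ (j + k) * (2 * (j : ℝ) - 1) * (Nat.factorial (j + k - 2) : ℝ)
            * (n.choose j : ℝ))
          / ((Nat.factorial k : ℝ) * (Nat.factorial (k - 1) : ℝ)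
            * (Nat.factorial (j - k) : ℝ) * ((n + j - 1).choose j : ℝ))
          * Real.exp (-t * (j.choose 2 : ℝ)) := by
  have hbase : ∀ t ≥ (0:ℝ), q t n
      = ∑ j ∈ Finset.Icc n n, cf n j n * Real.exp (-t * (j.choose 2 : ℝ)) := by
    apply step_lemma n n q hn le_rfl
    · rw [Finset.Icc_self, Finset.sum_singleton, cf_self n hn, hq0]
    · intro t ht
      rw [Finset.Icc_eq_empty (by omega), Finset.sum_empty]
      exact hzero t ht (n+1) (by omega)
    · exact hkolmogorov n hn le_rfl
  have main : ∀ d k, 1 ≤ k → k ≤ n → n ≤ k + d → ∀ t ≥ (0:ℝ),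
      q t k = ∑ j ∈ Finset.Icc k n, cf n j k * Real.exp (-t * (j.choose 2 : ℝ)) := by
    intro d
    induction d with
    | zero =>
      intro k hk1 hkn hle
      have hkn' : k = n := by omega
      subst hkn'
      exact hbase
    | succ d ih =>
      intro k hk1 hkn hle
      by_cases hc : k = n
      · subst hc; exact hbase
      · apply step_lemma n k q hk1 hkn
        · rw [hq0' k hc, cf_sum_zero n k hk1 (by omega)]
        · exact ih (k+1) (by omega) (by omega) (by omega)
        · exact hkolmogorov k hk1 hkn
  intro k hk1 hkn t ht
  rw [main (n - k) k hk1 hkn (by omega) t ht]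
  rfl
end

section
/- With the notation of the free product walk: Ĝ_β → Ĝ as β → 0⁺; i.e. the expected number of returns to the identity of the random walk on ℤ^d * ℤ_2 with ℤ_2-step probability β converges, as β → 0, to the expected number of returns to 0 of the walk on ℤ^d. -/
open scoped Classical

/-- `n`-step distribution of the right random walk with step distribution `step` on a
group `G`, starting from the identity. -/
noncomputable def convPow {G : Type*} [Group G] (step : G → ℝ) : ℕ → G → ℝ
  | 0 => fun g => if g = 1 then 1 else 0
  | n + 1 => fun g => ∑' h : G, convPow step n h * step (h⁻¹ * g)

/-- Step distribution of the walk on `ℤ^d ∗ ℤ₂` taking the `ℤ₂` generator with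
probability `β` and a `stepY`-distributed `ℤ^d`-step with probability `1 - β`. -/
noncomputable def coprodStep (d : ℕ) (β : ℝ) (stepY : Multiplicative (Fin d → ℤ) → ℝ) :
    Monoid.Coprod (Multiplicative (Fin d → ℤ)) (Multiplicative (ZMod 2)) → ℝ :=
  fun g =>
    β * (if g = Monoid.Coprod.inr (Multiplicative.ofAdd (1 : ZMod 2)) then 1 else 0)
      + (1 - β) * ∑' z : Multiplicative (Fin d → ℤ),
          if g = Monoid.Coprod.inl z then stepY z else 0

namespace Stmt18Aux

open ENNReal

variable {G H : Type*} [Group G] [Group H]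

/-- `ℝ≥0∞`-valued convolution powers. -/
noncomputable def eP (μ : G → ℝ≥0∞) : ℕ → G → ℝ≥0∞
  | 0 => fun g => if g = 1 then 1 else 0
  | n + 1 => fun g => ∑' h : G, eP μ n h * μ (h⁻¹ * g)

lemma eP_zero (μ : G → ℝ≥0∞) (g : G) : eP μ 0 g = if g = 1 then 1 else 0 := rfl

lemma eP_succ (μ : G → ℝ≥0∞) (n : ℕ) (g : G) :
    eP μ (n + 1) g = ∑' h : G, eP μ n h * μ (h⁻¹ * g) := rfl

lemma eP_mass (μ : G → ℝ≥0∞) (n : ℕ) : ∑' g, eP μ n g = (∑' g, μ g) ^ n := by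
  induction n with
  | zero => simp [eP_zero, tsum_ite_eq]
  | succ n ih =>
    calc ∑' g, eP μ (n + 1) g = ∑' g, ∑' h, eP μ n h * μ (h⁻¹ * g) := rfl
      _ = ∑' h, ∑' g, eP μ n h * μ (h⁻¹ * g) := ENNReal.tsum_comm
      _ = ∑' h, eP μ n h * ∑' g, μ (h⁻¹ * g) := by
          exact tsum_congr fun h => ENNReal.tsum_mul_left
      _ = ∑' h, eP μ n h * ∑' g, μ g := by
          refine tsum_congr fun h => ?_
          congr 1
          calc ∑' g, μ (h⁻¹ * g) = ∑' g, μ ((Equiv.mulLeft h⁻¹) g) := by simp [Equiv.coe_mulLeft]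
            _ = ∑' g, μ g := (Equiv.mulLeft h⁻¹).tsum_eq μ
      _ = (∑' g, μ g) ^ (n + 1) := by
          rw [ENNReal.tsum_mul_right, ih, pow_succ]

lemma eP_le_one {μ : G → ℝ≥0∞} (hm : ∑' g, μ g ≤ 1) (n : ℕ) (g : G) : eP μ n g ≤ 1 := by
  refine le_trans (ENNReal.le_tsum g) ?_
  rw [eP_mass]
  exact pow_le_one' hm n

lemma eP_ne_top {μ : G → ℝ≥0∞} (hm : ∑' g, μ g ≤ 1) (n : ℕ) (g : G) : eP μ n g ≠ ∞ :=
  ne_top_of_le_ne_top one_ne_top (eP_le_one hm n g)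

lemma convPow_eq_toReal {step : G → ℝ} (hnn : ∀ g, 0 ≤ step g)
    (hm : ∑' g, ENNReal.ofReal (step g) ≤ 1) (n : ℕ) (g : G) :
    convPow step n g = (eP (fun g => ENNReal.ofReal (step g)) n g).toReal := by
  induction n generalizing g with
  | zero =>
    rw [show convPow step 0 g = if g = 1 then 1 else 0 from rfl, eP_zero]
    split <;> simp
  | succ n ih =>
    have hfin : ∀ h : G,
        eP (fun g => ENNReal.ofReal (step g)) n h * ENNReal.ofReal (step (h⁻¹ * g)) ≠ ∞ :=
      fun h => ENNReal.mul_ne_top (eP_ne_top hm n h) ofReal_ne_top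
    rw [show convPow step (n + 1) g = ∑' h, convPow step n h * step (h⁻¹ * g) from rfl,
      eP_succ, ENNReal.tsum_toReal_eq hfin]
    exact tsum_congr fun h => by
      rw [ih, ENNReal.toReal_mul, ENNReal.toReal_ofReal (hnn _)]

/-- Pushforward of a measure along a homomorphism. -/
noncomputable def pushf (φ : G →* H) (μ : G → ℝ≥0∞) (h : H) : ℝ≥0∞ :=
  ∑' g : {g : G // φ g = h}, μ g

lemma tsum_fiber (φ : G →* H) (F : G → ℝ≥0∞) :
    ∑' g, F g = ∑' h, ∑' g : {g : G // φ g = h}, F g := by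
  rw [← (Equiv.sigmaFiberEquiv φ).tsum_eq F]
  exact ENNReal.tsum_sigma' _

lemma tsum_subtype_ite {G : Type*} {p : G → Prop} (a : G) (c : ℝ≥0∞) :
    ∑' g : {g : G // p g}, (if (g : G) = a then c else 0) = if p a then c else 0 := by
  by_cases hpa : p a
  · rw [if_pos hpa, tsum_eq_single (⟨a, hpa⟩ : {g : G // p g})]
    · simp
    · intro b hb
      exact if_neg fun hba => hb (Subtype.ext hba)
  · rw [if_neg hpa]
    have : ∀ g : {g : G // p g}, (if (g : G) = a then c else 0) = 0 := by
      intro g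
      exact if_neg fun hga => hpa (by rw [← hga]; exact g.2)
    simp only [this, tsum_zero]

def fiberShift (φ : G →* H) (k : G) (h : H) :
    {u : G // φ u = (φ k)⁻¹ * h} ≃ {g : G // φ g = h} where
  toFun u := ⟨k * u, by rw [map_mul, u.2, mul_inv_cancel_left]⟩
  invFun g := ⟨k⁻¹ * g, by rw [map_mul, g.2, map_inv]⟩
  left_inv u := Subtype.ext (by simp)
  right_inv g := Subtype.ext (by simp)

lemma pushf_shift (φ : G →* H) (μ : G → ℝ≥0∞) (k : G) (h : H) :
    pushf φ μ ((φ k)⁻¹ * h) = ∑' g : {g : G // φ g = h}, μ (k⁻¹ * g) := by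
  calc pushf φ μ ((φ k)⁻¹ * h) = ∑' u : {u : G // φ u = (φ k)⁻¹ * h}, μ ↑u := rfl
    _ = ∑' u : {u : G // φ u = (φ k)⁻¹ * h}, μ (k⁻¹ * ↑(fiberShift φ k h u)) :=
        tsum_congr fun u => by simp [fiberShift]
    _ = ∑' g : {g : G // φ g = h}, μ (k⁻¹ * ↑g) :=
        (fiberShift φ k h).tsum_eq (fun g => μ (k⁻¹ * (g : G)))

lemma eP_pushf (φ : G →* H) (μ : G → ℝ≥0∞) (n : ℕ) (h : H) :
    eP (pushf φ μ) n h = ∑' g : {g : G // φ g = h}, eP μ n g := by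
  induction n generalizing h with
  | zero =>
    show (if h = 1 then 1 else 0 : ℝ≥0∞)
        = ∑' g : {g : G // φ g = h}, (if (g : G) = 1 then 1 else 0)
    rw [tsum_subtype_ite (1 : G) (1 : ℝ≥0∞)]
    simp only [map_one]
    by_cases h1 : h = 1 <;> simp [h1, eq_comm]
  | succ n ih =>
    calc eP (pushf φ μ) (n + 1) h
        = ∑' h', eP (pushf φ μ) n h' * pushf φ μ (h'⁻¹ * h) := rfl
      _ = ∑' h', (∑' k : {k : G // φ k = h'}, eP μ n k) * pushf φ μ (h'⁻¹ * h) :=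
          tsum_congr fun h' => by rw [ih]
      _ = ∑' h', ∑' k : {k : G // φ k = h'}, eP μ n k * pushf φ μ (h'⁻¹ * h) :=
          tsum_congr fun h' => ENNReal.tsum_mul_right.symm
      _ = ∑' h', ∑' k : {k : G // φ k = h'}, ∑' g : {g : G // φ g = h},
            eP μ n k * μ ((k : G)⁻¹ * g) := by
          refine tsum_congr fun h' => tsum_congr fun k => ?_
          rw [show h'⁻¹ = (φ (k : G))⁻¹ from by rw [k.2], pushf_shift, ENNReal.tsum_mul_left]
      _ = ∑' k : G, ∑' g : {g : G // φ g = h}, eP μ n k * μ (k⁻¹ * g) :=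
          (tsum_fiber φ (fun k => ∑' g : {g : G // φ g = h}, eP μ n k * μ (k⁻¹ * g))).symm
      _ = ∑' g : {g : G // φ g = h}, ∑' k : G, eP μ n k * μ (k⁻¹ * g) := ENNReal.tsum_comm
      _ = ∑' g : {g : G // φ g = h}, eP μ (n + 1) g := rfl

lemma eP_lazy [DecidableEq G] (b c : ℝ≥0∞) (μ : G → ℝ≥0∞) (n : ℕ) (z : G) :
    eP (fun g => b * (if g = 1 then 1 else 0) + c * μ g) n z
      = ∑ k ∈ Finset.range (n + 1),
          (n.choose k : ℝ≥0∞) * b ^ (n - k) * c ^ k * eP μ k z := by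
  induction n generalizing z with
  | zero => simp [eP_zero]
  | succ n ih =>
    set ν : G → ℝ≥0∞ := fun g => b * (if g = 1 then 1 else 0) + c * μ g with hν
    have key : eP ν (n + 1) z = b * eP ν n z + c * ∑' h, eP ν n h * μ (h⁻¹ * z) := by
      rw [eP_succ]
      have e1 : ∀ h : G, eP ν n h * ν (h⁻¹ * z)
          = b * (if h = z then eP ν n h else 0) + c * (eP ν n h * μ (h⁻¹ * z)) := by
        intro h
        by_cases hh : h = z
        · subst hh
          simp only [hν, inv_mul_cancel, eq_self_iff_true, if_true]
          ring
        · have h2 : h⁻¹ * z ≠ 1 := fun hc => hh (by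
            have := inv_mul_eq_one.mp hc; exact this)
          simp only [hν, if_neg h2, if_neg hh]
          ring
      rw [tsum_congr e1, ENNReal.tsum_add, ENNReal.tsum_mul_left, ENNReal.tsum_mul_left,
        tsum_eq_single z (fun h hh => if_neg hh), if_pos rfl]
    have conv : ∑' h, eP ν n h * μ (h⁻¹ * z)
        = ∑ k ∈ Finset.range (n + 1),
            (n.choose k : ℝ≥0∞) * b ^ (n - k) * c ^ k * eP μ (k + 1) z := by
      calc ∑' h, eP ν n h * μ (h⁻¹ * z)
          = ∑' h, ∑ k ∈ Finset.range (n + 1),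
              (n.choose k : ℝ≥0∞) * b ^ (n - k) * c ^ k * (eP μ k h * μ (h⁻¹ * z)) := by
            refine tsum_congr fun h => ?_
            rw [ih, Finset.sum_mul]
            exact Finset.sum_congr rfl fun k _ => by ring
        _ = ∑ k ∈ Finset.range (n + 1), ∑' h,
              (n.choose k : ℝ≥0∞) * b ^ (n - k) * c ^ k * (eP μ k h * μ (h⁻¹ * z)) :=
            Summable.tsum_finsetSum fun k _ => ENNReal.summable
        _ = ∑ k ∈ Finset.range (n + 1),
              (n.choose k : ℝ≥0∞) * b ^ (n - k) * c ^ k * eP μ (k + 1) z := by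
            refine Finset.sum_congr rfl fun k _ => ?_
            rw [ENNReal.tsum_mul_left, eP_succ]
    rw [key, conv, ih, Finset.mul_sum, Finset.mul_sum]
    rw [Finset.sum_range_succ'
      (fun k => ((n + 1).choose k : ℝ≥0∞) * b ^ (n + 1 - k) * c ^ k * eP μ k z) (n + 1)]
    have hsplit : ∀ i ∈ Finset.range (n + 1),
        (((n + 1).choose (i + 1) : ℝ≥0∞)) * b ^ (n + 1 - (i + 1)) * c ^ (i + 1) * eP μ (i + 1) z
        = (n.choose i : ℝ≥0∞) * b ^ (n - i) * c ^ (i + 1) * eP μ (i + 1) z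
          + (n.choose (i + 1) : ℝ≥0∞) * b ^ (n - i) * c ^ (i + 1) * eP μ (i + 1) z := by
      intro i _
      rw [Nat.choose_succ_succ, Nat.succ_sub_succ]
      push_cast
      ring
    rw [Finset.sum_congr rfl hsplit, Finset.sum_add_distrib]
    have lhs2 : ∑ k ∈ Finset.range (n + 1),
        c * ((n.choose k : ℝ≥0∞) * b ^ (n - k) * c ^ k * eP μ (k + 1) z)
        = ∑ i ∈ Finset.range (n + 1),
            (n.choose i : ℝ≥0∞) * b ^ (n - i) * c ^ (i + 1) * eP μ (i + 1) z := by
      refine Finset.sum_congr rfl fun k _ => ?_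
      rw [pow_succ]
      ring
    have lhs1 : ∑ k ∈ Finset.range (n + 1),
        b * ((n.choose k : ℝ≥0∞) * b ^ (n - k) * c ^ k * eP μ k z)
        = ∑ i ∈ Finset.range (n + 1),
            (n.choose (i + 1) : ℝ≥0∞) * b ^ (n - i) * c ^ (i + 1) * eP μ (i + 1) z
          + ((n + 1).choose 0 : ℝ≥0∞) * b ^ (n + 1 - 0) * c ^ 0 * eP μ 0 z := by
      rw [Finset.sum_range_succ'
        (fun k => b * ((n.choose k : ℝ≥0∞) * b ^ (n - k) * c ^ k * eP μ k z)) n]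
      rw [Finset.sum_range_succ
        (fun i => (n.choose (i + 1) : ℝ≥0∞) * b ^ (n - i) * c ^ (i + 1) * eP μ (i + 1) z) n]
      rw [Nat.choose_succ_self, Nat.cast_zero]
      have hterm : ∀ i ∈ Finset.range n,
          b * ((n.choose (i + 1) : ℝ≥0∞) * b ^ (n - (i + 1)) * c ^ (i + 1) * eP μ (i + 1) z)
          = (n.choose (i + 1) : ℝ≥0∞) * b ^ (n - i) * c ^ (i + 1) * eP μ (i + 1) z := by
        intro i hi
        have hn : n - i = n - (i + 1) + 1 := by
          have := Finset.mem_range.mp hi; omega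
        rw [hn, pow_succ]
        ring
      rw [Finset.sum_congr rfl hterm]
      simp only [Nat.choose_zero_right, Nat.cast_one, Nat.sub_zero, pow_zero, Nat.choose_self]
      have : b * ((1 : ℝ≥0∞) * b ^ n * 1 * eP μ 0 z) = 1 * b ^ (n + 1) * 1 * eP μ 0 z := by
        rw [pow_succ]; ring
      rw [this]
      ring
    rw [lhs1, lhs2]
    ring

lemma tsum_antidiag (F : ℕ × ℕ → ℝ≥0∞) :
    ∑' n : ℕ, ∑ p ∈ Finset.HasAntidiagonal.antidiagonal n, F p = ∑' p : ℕ × ℕ, F p := by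
  rw [← Finset.HasAntidiagonal.sigmaAntidiagonalEquivProd.tsum_eq F, ENNReal.tsum_sigma']
  exact tsum_congr fun n => (Finset.tsum_subtype (Finset.HasAntidiagonal.antidiagonal n) F).symm

lemma tsum_choose_pow (b : ℝ≥0∞) (k : ℕ) :
    ∑' j : ℕ, ((k + j).choose k : ℝ≥0∞) * b ^ j = ((1 - b)⁻¹) ^ (k + 1) := by
  induction k with
  | zero => simp [ENNReal.tsum_geometric]
  | succ k ih =>
    have hock : ∀ j : ℕ, (((k + 1 + j).choose (k + 1) : ℕ) : ℝ≥0∞)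
        = ∑ i ∈ Finset.range (j + 1), ((k + i).choose k : ℝ≥0∞) := by
      intro j
      rw [← Nat.cast_sum]
      congr 1
      induction j with
      | zero => simp
      | succ j ihj =>
        rw [Finset.sum_range_succ, ← ihj, show k + 1 + (j + 1) = (k + 1 + j) + 1 by omega,
          Nat.choose_succ_succ, show k + 1 + j = k + (j + 1) by omega]
        exact Nat.add_comm _ _
    calc ∑' j : ℕ, ((k + 1 + j).choose (k + 1) : ℝ≥0∞) * b ^ j
        = ∑' j : ℕ, ∑ i ∈ Finset.range (j + 1),
            ((k + i).choose k : ℝ≥0∞) * b ^ i * b ^ (j - i) := by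
          refine tsum_congr fun j => ?_
          rw [hock, Finset.sum_mul]
          refine Finset.sum_congr rfl fun i hi => ?_
          rw [mul_assoc, ← pow_add]
          congr 2
          have := Finset.mem_range.mp hi; omega
      _ = ∑' j : ℕ, ∑ p ∈ Finset.HasAntidiagonal.antidiagonal j,
            ((k + p.1).choose k : ℝ≥0∞) * b ^ p.1 * b ^ p.2 := by
          refine tsum_congr fun j => ?_
          rw [Finset.Nat.sum_antidiagonal_eq_sum_range_succ_mk]
      _ = ∑' p : ℕ × ℕ, ((k + p.1).choose k : ℝ≥0∞) * b ^ p.1 * b ^ p.2 := tsum_antidiag _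
      _ = (∑' i : ℕ, ((k + i).choose k : ℝ≥0∞) * b ^ i) * ∑' j : ℕ, b ^ j := by
          rw [ENNReal.tsum_prod']
          rw [show (∑' (a : ℕ) (b' : ℕ), ((k + a).choose k : ℝ≥0∞) * b ^ a * b ^ b')
              = ∑' a : ℕ, ((k + a).choose k : ℝ≥0∞) * b ^ a * ∑' j : ℕ, b ^ j from
            tsum_congr fun a => ENNReal.tsum_mul_left]
          rw [ENNReal.tsum_mul_right]
      _ = ((1 - b)⁻¹) ^ (k + 1 + 1) := by
          rw [ih, ENNReal.tsum_geometric, ← pow_succ]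

lemma green_lazy [DecidableEq G] (b : ℝ≥0∞) (hb : b < 1) (μ : G → ℝ≥0∞) (z : G) :
    ∑' n : ℕ, eP (fun g => b * (if g = 1 then 1 else 0) + (1 - b) * μ g) n z
      = (1 - b)⁻¹ * ∑' k : ℕ, eP μ k z := by
  set c : ℝ≥0∞ := 1 - b with hcdef
  have hc0 : c ≠ 0 := fun h => absurd (tsub_eq_zero_iff_le.mp h) (not_le.mpr hb)
  have hctop : c ≠ ∞ := ne_top_of_le_ne_top one_ne_top tsub_le_self
  set F : ℕ × ℕ → ℝ≥0∞ :=
    fun p => ((p.1 + p.2).choose p.1 : ℝ≥0∞) * b ^ p.2 * c ^ p.1 * eP μ p.1 z with hF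
  calc ∑' n : ℕ, eP (fun g => b * (if g = 1 then 1 else 0) + c * μ g) n z
      = ∑' n : ℕ, ∑ p ∈ Finset.HasAntidiagonal.antidiagonal n, F p := by
        refine tsum_congr fun n => ?_
        rw [eP_lazy, Finset.Nat.sum_antidiagonal_eq_sum_range_succ_mk F n]
        refine Finset.sum_congr rfl fun k hk => ?_
        have hkn : k ≤ n := Nat.lt_succ_iff.mp (Finset.mem_range.mp hk)
        simp only [hF]
        rw [Nat.add_sub_cancel' hkn]
    _ = ∑' p : ℕ × ℕ, F p := tsum_antidiag F
    _ = ∑' k : ℕ, (c ^ k * eP μ k z) * ∑' j : ℕ, ((k + j).choose k : ℝ≥0∞) * b ^ j := by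
        rw [ENNReal.tsum_prod']
        refine tsum_congr fun k => ?_
        rw [← ENNReal.tsum_mul_left]
        exact tsum_congr fun j => by simp only [hF]; ring
    _ = ∑' k : ℕ, c⁻¹ * eP μ k z := by
        refine tsum_congr fun k => ?_
        rw [tsum_choose_pow, ← hcdef]
        rw [show c ^ k * eP μ k z * (c⁻¹) ^ (k + 1)
            = (c ^ k * (c⁻¹) ^ k) * (c⁻¹ * eP μ k z) from by rw [pow_succ]; ring,
          ← mul_pow, ENNReal.mul_inv_cancel hc0 hctop, one_pow, one_mul]
    _ = (1 - b)⁻¹ * ∑' k : ℕ, eP μ k z := ENNReal.tsum_mul_left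


section CoprodConcrete

variable {d : ℕ} {β : ℝ} {stepY : Multiplicative (Fin d → ℤ) → ℝ}

abbrev Md (d : ℕ) := Multiplicative (Fin d → ℤ)
abbrev Cd (d : ℕ) := Monoid.Coprod (Md d) (Multiplicative (ZMod 2))

/-- Projection of the free product onto the `ℤ^d` factor. -/
noncomputable def projM (d : ℕ) : Cd d →* Md d :=
  Monoid.Coprod.lift (MonoidHom.id _) 1

lemma projM_inl (z : Md d) : projM d (Monoid.Coprod.inl z) = z := by
  simp [projM]

lemma projM_inr (x : Multiplicative (ZMod 2)) : projM d (Monoid.Coprod.inr x) = 1 := by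
  simp [projM]

lemma tsum_inl_ite (stepY : Md d → ℝ) (w : Md d) :
    (∑' z : Md d, (if (Monoid.Coprod.inl w : Cd d) = Monoid.Coprod.inl z
        then ENNReal.ofReal (stepY z) else 0)) = ENNReal.ofReal (stepY w) := by
  rw [tsum_eq_single w
    (fun z hz => if_neg fun h => hz ((Monoid.Coprod.inl_injective h).symm)), if_pos rfl]

lemma tsum_inl_ite_real (stepY : Md d → ℝ) (w : Md d) :
    (∑' z : Md d, (if (Monoid.Coprod.inl w : Cd d) = Monoid.Coprod.inl z
        then stepY z else 0)) = stepY w := by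
  rw [tsum_eq_single w
    (fun z hz => if_neg fun h => hz ((Monoid.Coprod.inl_injective h).symm)), if_pos rfl]

lemma ofReal_coprodStep (hβ0 : 0 ≤ β) (hβ1 : β ≤ 1) (hnn : ∀ z, 0 ≤ stepY z)
    (g : Cd d) :
    ENNReal.ofReal (coprodStep d β stepY g)
      = ENNReal.ofReal β *
          (if g = Monoid.Coprod.inr (Multiplicative.ofAdd (1 : ZMod 2)) then 1 else 0)
        + ENNReal.ofReal (1 - β) *
            ∑' z : Md d, (if g = Monoid.Coprod.inl z then ENNReal.ofReal (stepY z) else 0) := by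
  have hI : (0:ℝ) ≤ (if g = Monoid.Coprod.inr (Multiplicative.ofAdd (1 : ZMod 2))
      then (1:ℝ) else 0) := by split <;> norm_num
  have hT : (0:ℝ) ≤ ∑' z : Md d, (if g = Monoid.Coprod.inl z then stepY z else 0) := by
    refine tsum_nonneg fun z => ?_
    by_cases h : g = Monoid.Coprod.inl z
    · rw [if_pos h]; exact hnn z
    · rw [if_neg h]
  rw [coprodStep]
  rw [ENNReal.ofReal_add (mul_nonneg hβ0 hI) (mul_nonneg (by linarith) hT),
    ENNReal.ofReal_mul hβ0, ENNReal.ofReal_mul (by linarith : (0:ℝ) ≤ 1 - β)]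
  congr 1
  · congr 1
    split <;> simp
  · congr 1
    by_cases hg : ∃ w : Md d, g = Monoid.Coprod.inl w
    · obtain ⟨w, rfl⟩ := hg
      rw [tsum_inl_ite_real stepY w, tsum_inl_ite stepY w]
    · have h1 : ∀ z : Md d, (if g = Monoid.Coprod.inl z then stepY z else 0) = 0 :=
        fun z => if_neg fun h => hg ⟨z, h⟩
      have h2 : ∀ z : Md d, (if g = Monoid.Coprod.inl z
          then ENNReal.ofReal (stepY z) else 0) = 0 :=
        fun z => if_neg fun h => hg ⟨z, h⟩
      simp only [h1, h2, tsum_zero, ENNReal.ofReal_zero]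

lemma pushf_coprod (hβ0 : 0 ≤ β) (hβ1 : β ≤ 1) (hnn : ∀ z, 0 ≤ stepY z) (z : Md d) :
    pushf (projM d) (fun g => ENNReal.ofReal (coprodStep d β stepY g)) z
      = ENNReal.ofReal β * (if z = 1 then 1 else 0)
        + ENNReal.ofReal (1 - β) * ENNReal.ofReal (stepY z) := by
  rw [pushf]
  rw [tsum_congr (fun g : {g : Cd d // projM d g = z} =>
    ofReal_coprodStep hβ0 hβ1 hnn (g : Cd d))]
  rw [ENNReal.tsum_add, ENNReal.tsum_mul_left, ENNReal.tsum_mul_left]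
  congr 1
  · congr 1
    rw [tsum_subtype_ite (p := fun g : Cd d => projM d g = z) _ 1, projM_inr]
    by_cases h1 : z = 1 <;> simp [h1, eq_comm]
  · congr 1
    calc ∑' g : {g : Cd d // projM d g = z}, ∑' w : Md d,
            (if (g : Cd d) = Monoid.Coprod.inl w then ENNReal.ofReal (stepY w) else 0)
        = ∑' w : Md d, ∑' g : {g : Cd d // projM d g = z},
            (if (g : Cd d) = Monoid.Coprod.inl w then ENNReal.ofReal (stepY w) else 0) :=
          ENNReal.tsum_comm
      _ = ∑' w : Md d, (if w = z then ENNReal.ofReal (stepY w) else 0) := by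
          refine tsum_congr fun w => ?_
          rw [tsum_subtype_ite (p := fun g : Cd d => projM d g = z) (Monoid.Coprod.inl w)
            (ENNReal.ofReal (stepY w))]
          by_cases h : w = z
          · rw [if_pos (by rw [projM_inl]; exact h), if_pos h]
          · rw [if_neg (by rw [projM_inl]; exact h), if_neg h]
      _ = ENNReal.ofReal (stepY z) := by
          rw [tsum_eq_single z (fun w hw => if_neg hw), if_pos rfl]

lemma mass_coprod (hβ0 : 0 ≤ β) (hβ1 : β ≤ 1) (hnn : ∀ z, 0 ≤ stepY z)
    (hY : ∑' w : Md d, ENNReal.ofReal (stepY w) = 1) :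
    ∑' g : Cd d, ENNReal.ofReal (coprodStep d β stepY g) = 1 := by
  rw [tsum_fiber (projM d) (fun g => ENNReal.ofReal (coprodStep d β stepY g))]
  have : ∀ z : Md d, (∑' g : {g : Cd d // projM d g = z},
      ENNReal.ofReal (coprodStep d β stepY (g : Cd d)))
      = ENNReal.ofReal β * (if z = 1 then 1 else 0)
        + ENNReal.ofReal (1 - β) * ENNReal.ofReal (stepY z) :=
    fun z => pushf_coprod hβ0 hβ1 hnn z
  rw [tsum_congr this, ENNReal.tsum_add, ENNReal.tsum_mul_left, ENNReal.tsum_mul_left,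
    tsum_ite_eq (1 : Md d) (fun _ => (1 : ℝ≥0∞)), hY, mul_one, mul_one,
    ← ENNReal.ofReal_add hβ0 (by linarith), show β + (1 - β) = 1 by ring, ENNReal.ofReal_one]

lemma eP_lower (hβ0 : 0 ≤ β) (hβ1 : β ≤ 1) (hnn : ∀ z, 0 ≤ stepY z) (n : ℕ) (z : Md d) :
    (ENNReal.ofReal (1 - β)) ^ n * eP (fun w : Md d => ENNReal.ofReal (stepY w)) n z
      ≤ eP (fun g : Cd d => ENNReal.ofReal (coprodStep d β stepY g)) n
          (Monoid.Coprod.inl z) := by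
  have step_ge : ∀ x : Md d,
      ENNReal.ofReal (1 - β) * ENNReal.ofReal (stepY x)
        ≤ ENNReal.ofReal (coprodStep d β stepY (Monoid.Coprod.inl x)) := by
    intro x
    rw [ofReal_coprodStep hβ0 hβ1 hnn, tsum_inl_ite stepY x]
    exact self_le_add_left _ _
  induction n generalizing z with
  | zero =>
    rw [eP_zero, eP_zero, pow_zero, one_mul]
    by_cases hz : z = 1
    · subst hz
      rw [if_pos rfl, if_pos (map_one (Monoid.Coprod.inl : Md d →* Cd d))]
    · rw [if_neg hz, if_neg (fun h => hz (Monoid.Coprod.inl_injective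
        (h.trans (map_one (Monoid.Coprod.inl : Md d →* Cd d)).symm)))]
  | succ n ih =>
    calc (ENNReal.ofReal (1 - β)) ^ (n + 1)
          * eP (fun w : Md d => ENNReal.ofReal (stepY w)) (n + 1) z
        = ∑' w : Md d,
            ((ENNReal.ofReal (1 - β)) ^ n * eP (fun w : Md d => ENNReal.ofReal (stepY w)) n w)
            * (ENNReal.ofReal (1 - β) * ENNReal.ofReal (stepY (w⁻¹ * z))) := by
          rw [eP_succ, ← ENNReal.tsum_mul_left]
          exact tsum_congr fun w => by rw [pow_succ]; ring
      _ ≤ ∑' w : Md d,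
            eP (fun g : Cd d => ENNReal.ofReal (coprodStep d β stepY g)) n
              (Monoid.Coprod.inl w)
            * ENNReal.ofReal (coprodStep d β stepY
                ((Monoid.Coprod.inl w : Cd d)⁻¹ * Monoid.Coprod.inl z)) := by
          refine Summable.tsum_le_tsum (fun w => ?_) ENNReal.summable ENNReal.summable
          refine mul_le_mul' (ih w) ?_
          rw [show ((Monoid.Coprod.inl w : Cd d))⁻¹ * Monoid.Coprod.inl z
              = (Monoid.Coprod.inl (w⁻¹ * z) : Cd d) from by rw [map_mul, map_inv]]
          exact step_ge _
      _ ≤ ∑' h : Cd d,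
            eP (fun g : Cd d => ENNReal.ofReal (coprodStep d β stepY g)) n h
            * ENNReal.ofReal (coprodStep d β stepY (h⁻¹ * Monoid.Coprod.inl z)) :=
          ENNReal.tsum_comp_le_tsum_of_injective Monoid.Coprod.inl_injective
            (fun h => eP (fun g : Cd d => ENNReal.ofReal (coprodStep d β stepY g)) n h
              * ENNReal.ofReal (coprodStep d β stepY (h⁻¹ * Monoid.Coprod.inl z)))
      _ = eP (fun g : Cd d => ENNReal.ofReal (coprodStep d β stepY g)) (n + 1)
            (Monoid.Coprod.inl z) := (eP_succ _ _ _).symm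

end CoprodConcrete

end Stmt18Aux

/-- `Ĝ_β → Ĝ` as `β → 0⁺`: the expected number of returns to the identity of the random
walk on `ℤ^d ∗ ℤ₂` with `ℤ₂`-step probability `β` converges, as `β → 0`, to the expected
number of returns to `0` of the walk on `ℤ^d`. -/
theorem stmt18 (d : ℕ) (hd : 3 ≤ d)
    (stepY : Multiplicative (Fin d → ℤ) → ℝ)
    (hnn : ∀ z, 0 ≤ stepY z) (hsum : ∑' z, stepY z = 1)
    (hsymm : ∀ z, stepY z = stepY z⁻¹)
    (htrans : Summable fun n : ℕ => convPow stepY n 1) :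
    Filter.Tendsto (fun β : ℝ => ∑' n : ℕ, convPow (coprodStep d β stepY) n 1)
      (nhdsWithin 0 (Set.Ioi 0)) (nhds (∑' n : ℕ, convPow stepY n 1)) := by
  classical
  open Stmt18Aux ENNReal in
  have hYsummable : Summable stepY := by
    by_contra hs
    rw [tsum_eq_zero_of_not_summable hs] at hsum
    norm_num at hsum
  have hYmass : ∑' z : Multiplicative (Fin d → ℤ), ENNReal.ofReal (stepY z) = 1 := by
    rw [← ENNReal.ofReal_tsum_of_nonneg hnn hYsummable, hsum, ENNReal.ofReal_one]
  set μY : Multiplicative (Fin d → ℤ) → ℝ≥0∞ := fun z => ENNReal.ofReal (stepY z) with hμYdef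
  have hbY : ∀ (n : ℕ) (z : Multiplicative (Fin d → ℤ)),
      convPow stepY n z = (Stmt18Aux.eP μY n z).toReal :=
    fun n z => Stmt18Aux.convPow_eq_toReal hnn (le_of_eq hYmass) n z
  have hqfin : ∀ n, Stmt18Aux.eP μY n 1 ≠ ∞ := fun n => Stmt18Aux.eP_ne_top (le_of_eq hYmass) n 1
  have pnn : ∀ n : ℕ, 0 ≤ convPow stepY n 1 := fun n => by
    rw [hbY n 1]; exact ENNReal.toReal_nonneg
  have hq : ∀ n, Stmt18Aux.eP μY n 1 = ENNReal.ofReal (convPow stepY n 1) := fun n => by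
    rw [hbY n 1, ENNReal.ofReal_toReal (hqfin n)]
  set Ghat : ℝ := ∑' n : ℕ, convPow stepY n 1 with hGhatdef
  have hGnn : 0 ≤ Ghat := tsum_nonneg pnn
  have hQ : ∑' n, Stmt18Aux.eP μY n 1 = ENNReal.ofReal Ghat := by
    rw [hGhatdef, ENNReal.ofReal_tsum_of_nonneg pnn htrans]
    exact tsum_congr hq
  have key : ∀ β : ℝ, 0 < β → β < 1 →
      (∑' n : ℕ, (1 - β) ^ n * convPow stepY n 1)
          ≤ (∑' n : ℕ, convPow (coprodStep d β stepY) n 1)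
        ∧ (∑' n : ℕ, convPow (coprodStep d β stepY) n 1) ≤ (1 - β)⁻¹ * Ghat := by
    intro β hβ0 hβ1
    have hcnn : (0:ℝ) ≤ 1 - β := by linarith
    set b : ℝ≥0∞ := ENNReal.ofReal β with hbdef
    set c : ℝ≥0∞ := ENNReal.ofReal (1 - β) with hcdef
    set μβ : Stmt18Aux.Cd d → ℝ≥0∞ := fun g => ENNReal.ofReal (coprodStep d β stepY g) with hμβdef
    have hmass : ∑' g, μβ g = 1 := Stmt18Aux.mass_coprod hβ0.le hβ1.le hnn hYmass
    have hcsnn : ∀ g, 0 ≤ coprodStep d β stepY g := by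
      intro g
      have h1 : (0:ℝ) ≤ (if g = Monoid.Coprod.inr (Multiplicative.ofAdd (1 : ZMod 2))
          then (1:ℝ) else 0) := by split <;> norm_num
      have h2 : (0:ℝ) ≤ ∑' z : Stmt18Aux.Md d,
          (if g = Monoid.Coprod.inl z then stepY z else 0) := by
        refine tsum_nonneg fun z => ?_
        by_cases h : g = Monoid.Coprod.inl z
        · rw [if_pos h]; exact hnn z
        · rw [if_neg h]
      exact add_nonneg (mul_nonneg hβ0.le h1) (mul_nonneg hcnn h2)
    have hbβ : ∀ n, convPow (coprodStep d β stepY) n 1 = (Stmt18Aux.eP μβ n 1).toReal :=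
      fun n => Stmt18Aux.convPow_eq_toReal hcsnn (le_of_eq hmass) n 1
    have hβfin : ∀ n, Stmt18Aux.eP μβ n 1 ≠ ∞ := fun n => Stmt18Aux.eP_ne_top (le_of_eq hmass) n 1
    have hc1b : c = 1 - b := by
      rw [hcdef, ENNReal.ofReal_sub 1 hβ0.le, ENNReal.ofReal_one, hbdef]
    have hblt : b < 1 := by
      rw [hbdef]
      exact ENNReal.ofReal_lt_one.mpr hβ1
    have hupper_n : ∀ n, Stmt18Aux.eP μβ n 1
        ≤ Stmt18Aux.eP (Stmt18Aux.pushf (Stmt18Aux.projM d) μβ) n 1 := by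
      intro n
      rw [Stmt18Aux.eP_pushf]
      exact ENNReal.le_tsum (⟨1, map_one (Stmt18Aux.projM d)⟩ :
        {g : Stmt18Aux.Cd d // Stmt18Aux.projM d g = 1})
    have hpush : Stmt18Aux.pushf (Stmt18Aux.projM d) μβ
        = fun z => b * (if z = 1 then 1 else 0) + (1 - b) * μY z := by
      funext z
      rw [show Stmt18Aux.pushf (Stmt18Aux.projM d) μβ z
          = Stmt18Aux.pushf (Stmt18Aux.projM d)
              (fun g => ENNReal.ofReal (coprodStep d β stepY g)) z from rfl,
        Stmt18Aux.pushf_coprod hβ0.le hβ1.le hnn z, ← hbdef, ← hcdef, hc1b]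
    have hgreen : ∑' n, Stmt18Aux.eP (Stmt18Aux.pushf (Stmt18Aux.projM d) μβ) n 1
        = (1 - b)⁻¹ * ENNReal.ofReal Ghat := by
      rw [hpush, Stmt18Aux.green_lazy b hblt μY 1, hQ]
    have hE : ∑' n, Stmt18Aux.eP μβ n 1 ≤ (1 - b)⁻¹ * ENNReal.ofReal Ghat := by
      rw [← hgreen]
      exact Summable.tsum_le_tsum hupper_n ENNReal.summable ENNReal.summable
    have hc0 : c ≠ 0 := by
      rw [hcdef]
      intro h
      have := ENNReal.ofReal_eq_zero.mp h
      linarith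
    have h1btop : (1 - b)⁻¹ ≠ ∞ := by
      rw [← hc1b]
      exact ENNReal.inv_ne_top.mpr hc0
    have hUtop : (1 - b)⁻¹ * ENNReal.ofReal Ghat ≠ ∞ :=
      ENNReal.mul_ne_top h1btop ENNReal.ofReal_ne_top
    have hEtop : ∑' n, Stmt18Aux.eP μβ n 1 ≠ ∞ := ne_top_of_le_ne_top hUtop hE
    have hfeq : ∑' n : ℕ, convPow (coprodStep d β stepY) n 1
        = (∑' n, Stmt18Aux.eP μβ n 1).toReal := by
      rw [ENNReal.tsum_toReal_eq hβfin]
      exact tsum_congr hbβ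
    constructor
    · have hlow_n : ∀ n, c ^ n * Stmt18Aux.eP μY n 1 ≤ Stmt18Aux.eP μβ n 1 := by
        intro n
        have h := Stmt18Aux.eP_lower (β := β) (stepY := stepY) hβ0.le hβ1.le hnn n
          (1 : Multiplicative (Fin d → ℤ))
        rwa [map_one] at h
      have hL : ∑' n, c ^ n * Stmt18Aux.eP μY n 1 ≤ ∑' n, Stmt18Aux.eP μβ n 1 :=
        Summable.tsum_le_tsum hlow_n ENNReal.summable ENNReal.summable
      have hLfin : ∀ n, c ^ n * Stmt18Aux.eP μY n 1 ≠ ∞ := fun n =>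
        ENNReal.mul_ne_top (ENNReal.pow_ne_top (by rw [hcdef]; exact ENNReal.ofReal_ne_top))
          (hqfin n)
      have hLre : ∑' n : ℕ, (1 - β) ^ n * convPow stepY n 1
          = (∑' n, c ^ n * Stmt18Aux.eP μY n 1).toReal := by
        rw [ENNReal.tsum_toReal_eq hLfin]
        refine tsum_congr fun n => ?_
        rw [ENNReal.toReal_mul, ENNReal.toReal_pow, hcdef, ENNReal.toReal_ofReal hcnn, hbY n 1]
      rw [hLre, hfeq]
      exact ENNReal.toReal_mono hEtop hL
    · rw [hfeq]
      calc (∑' n, Stmt18Aux.eP μβ n 1).toReal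
          ≤ ((1 - b)⁻¹ * ENNReal.ofReal Ghat).toReal := ENNReal.toReal_mono hUtop hE
        _ = (1 - β)⁻¹ * Ghat := by
            rw [ENNReal.toReal_mul, ENNReal.toReal_inv, ← hc1b, hcdef,
              ENNReal.toReal_ofReal hcnn, ENNReal.toReal_ofReal hGnn]
  have hev : Set.Ioo (0:ℝ) 1 ∈ nhdsWithin (0:ℝ) (Set.Ioi 0) :=
    Ioo_mem_nhdsGT_of_mem (Set.mem_Ico.mpr ⟨le_refl 0, one_pos⟩)
  refine tendsto_of_tendsto_of_tendsto_of_le_of_le'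
    (g := fun β : ℝ => ∑' n : ℕ, (1 - β) ^ n * convPow stepY n 1)
    (h := fun β : ℝ => (1 - β)⁻¹ * Ghat) ?_ ?_ ?_ ?_
  · refine tendsto_tsum_of_dominated_convergence
      (f := fun (β : ℝ) (n : ℕ) => (1 - β) ^ n * convPow stepY n 1)
      (g := fun n : ℕ => convPow stepY n 1)
      (bound := fun n : ℕ => convPow stepY n 1) htrans ?_ ?_
    · intro k
      have hc : Filter.Tendsto (fun β : ℝ => (1 - β) ^ k * convPow stepY k 1)
          (nhds 0) (nhds ((1 - 0) ^ k * convPow stepY k 1)) :=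
        (((continuous_const.sub continuous_id).pow k).mul continuous_const).tendsto 0
      simpa using hc.mono_left nhdsWithin_le_nhds
    · filter_upwards [hev] with β hβ
      intro k
      have h0 : (0:ℝ) ≤ 1 - β := by have := hβ.2; linarith
      have h1 : (1 - β : ℝ) ≤ 1 := by have := hβ.1; linarith
      rw [Real.norm_eq_abs, abs_of_nonneg (mul_nonneg (pow_nonneg h0 k) (pnn k))]
      calc (1 - β) ^ k * convPow stepY k 1 ≤ 1 * convPow stepY k 1 :=
          mul_le_mul_of_nonneg_right (pow_le_one₀ h0 h1) (pnn k)
        _ = convPow stepY k 1 := one_mul _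
  · have hc : Filter.Tendsto (fun β : ℝ => (1 - β)⁻¹ * Ghat)
        (nhds 0) (nhds ((1 - 0)⁻¹ * Ghat)) := by
      refine Filter.Tendsto.mul ?_ tendsto_const_nhds
      exact ((continuous_const.sub continuous_id).tendsto 0).inv₀ (by norm_num)
    simpa using hc.mono_left nhdsWithin_le_nhds
  · filter_upwards [hev] with β hβ
    exact (key β hβ.1 hβ.2).1
  · filter_upwards [hev] with β hβ
    exact (key β hβ.1 hβ.2).2
end
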